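/- Under the same setup as the SGD convergence theorem, with the specific stepsize choice η = c_γ/K^{1/(1+γ)} where c_γ = (1/σ)·((1+γ)(f(w^0)−f_*)/(γM))^{1/(1+γ)}, we have min_{0 ≤ k ≤ K−1} E‖∇f(w^k)‖² ≤ a_γ/K^{γ/(1+γ)} where a_γ = σ·(((1+γ)/γ)M)^{1/(1+γ)}·(f(w^0)−f_*)^{γ/(1+γ)}. -/

import Mathlib

open MeasureTheory

lemma abs_coord_le' {d : ℕ} (x : EuclideanSpace ℝ (Fin d)) (i : Fin d) : |x i| ≤ ‖x‖ := by
  rw [EuclideanSpace.norm_eq]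
  calc |x i| = Real.sqrt (‖x i‖ ^ 2) := by rw [Real.sqrt_sq (norm_nonneg _), Real.norm_eq_abs]
  _ ≤ _ := Real.sqrt_le_sqrt (Finset.single_le_sum (fun j _ => sq_nonneg ‖x j‖)
      (Finset.mem_univ i))

lemma condexp_clm' {Ω : Type*} {m : MeasurableSpace Ω} [m0 : MeasurableSpace Ω]
    {μ : Measure Ω} [IsFiniteMeasure μ] (hm : m ≤ m0)
    {E F : Type*} [NormedAddCommGroup E] [NormedSpace ℝ E] [CompleteSpace E]
    [NormedAddCommGroup F] [NormedSpace ℝ F] [CompleteSpace F]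
    (L : E →L[ℝ] F) {G : Ω → E} (hG : Integrable G μ) :
    (μ[fun ω => L (G ω) | m]) =ᵐ[μ] fun ω => L ((μ[G | m]) ω) := by
  refine (ae_eq_condExp_of_forall_setIntegral_eq hm (L.integrable_comp hG)
    (fun s _ _ => (L.integrable_comp integrable_condExp).integrableOn)
    (fun s hs hμs => ?_) ?_).symm
  · rw [ContinuousLinearMap.integral_comp_comm L integrable_condExp.integrableOn,
      ContinuousLinearMap.integral_comp_comm L hG.integrableOn,
      setIntegral_condExp hm hG hs]
  · exact StronglyMeasurable.aestronglyMeasurable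
      (L.continuous.comp_stronglyMeasurable stronglyMeasurable_condExp)

lemma integral_inner_condexp' {Ω : Type*} {m : MeasurableSpace Ω} [m0 : MeasurableSpace Ω]
    {μ : Measure Ω} [IsProbabilityMeasure μ] (hm : m ≤ m0) {d : ℕ}
    {v G : Ω → EuclideanSpace ℝ (Fin d)}
    (hv : StronglyMeasurable[m] v) (hG : Integrable G μ)
    (hnorm : Integrable (fun ω => ‖v ω‖ * ‖G ω‖) μ) :
    ∫ ω, (inner ℝ (v ω) (G ω) : ℝ) ∂μ = ∫ ω, (inner ℝ (v ω) ((μ[G | m]) ω) : ℝ) ∂μ := by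
  have hvi : ∀ i : Fin d, StronglyMeasurable[m] (fun ω => v ω i) := fun i =>
    (EuclideanSpace.proj i).continuous.comp_stronglyMeasurable hv
  have hGi : ∀ i : Fin d, Integrable (fun ω => G ω i) μ := fun i =>
    (EuclideanSpace.proj (𝕜 := ℝ) i).integrable_comp hG
  have hprod : ∀ i : Fin d, Integrable (fun ω => v ω i * G ω i) μ := by
    intro i
    refine hnorm.mono' (((hvi i).mono hm).aestronglyMeasurable.mul
      (hGi i).aestronglyMeasurable) (Filter.Eventually.of_forall fun ω => ?_)
    rw [Real.norm_eq_abs, abs_mul]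
    exact mul_le_mul (abs_coord_le' _ i) (abs_coord_le' _ i) (abs_nonneg _) (norm_nonneg _)
  have key : ∀ i : Fin d, μ[fun ω => v ω i * G ω i | m]
      =ᵐ[μ] fun ω => v ω i * ((μ[G | m]) ω i) := by
    intro i
    have h1 : μ[fun ω => v ω i * G ω i | m]
        =ᵐ[μ] fun ω => v ω i * (μ[fun ω' => G ω' i | m]) ω :=
      condExp_mul_of_stronglyMeasurable_left (μ := μ) (hvi i) (hprod i) (hGi i)
    have h2 : μ[fun ω' => G ω' i | m] =ᵐ[μ] fun ω => (μ[G | m]) ω i :=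
      condexp_clm' hm (EuclideanSpace.proj (𝕜 := ℝ) i) hG
    filter_upwards [h1, h2] with ω h1ω h2ω
    rw [h1ω, h2ω]
  have hinner : ∀ (x y : EuclideanSpace ℝ (Fin d)),
      (inner ℝ x y : ℝ) = ∑ i, x i * y i := by
    intro x y
    simp [PiLp.inner_apply, mul_comm]
  have hsum : (fun ω => (inner ℝ (v ω) (G ω) : ℝ))
      = ∑ i : Fin d, (fun ω => v ω i * G ω i) := by
    funext ω
    rw [hinner, Finset.sum_apply]
  have hcesum := condExp_finsetSum (μ := μ) (m := m)
      (f := fun (i : Fin d) (ω : Ω) => v ω i * G ω i) (s := Finset.univ)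
      (fun i _ => hprod i)
  calc ∫ ω, (inner ℝ (v ω) (G ω) : ℝ) ∂μ
      = ∫ ω, (μ[fun ω' => (inner ℝ (v ω') (G ω') : ℝ) | m]) ω ∂μ :=
        (integral_condExp hm).symm
    _ = ∫ ω, (inner ℝ (v ω) ((μ[G | m]) ω) : ℝ) ∂μ := by
        refine integral_congr_ae ?_
        rw [hsum]
        refine hcesum.trans ?_
        have : ∀ᵐ ω ∂μ, ∀ i : Fin d, (μ[fun ω' => v ω' i * G ω' i | m]) ω
            = v ω i * ((μ[G | m]) ω i) := by
          rw [MeasureTheory.ae_all_iff]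
          exact fun i => key i
        filter_upwards [this] with ω hω
        rw [Finset.sum_apply, hinner]
        exact Finset.sum_congr rfl fun i _ => hω i

theorem descent_lemma' {d : ℕ} (f : EuclideanSpace ℝ (Fin d) → ℝ) (hf : Differentiable ℝ f)
    (γ M : ℝ) (hγ0 : 0 < γ) (hM : 0 < M)
    (hHolder : ∀ x y : EuclideanSpace ℝ (Fin d),
      ‖gradient f x - gradient f y‖ ≤ M * ‖x - y‖ ^ γ)
    (x v : EuclideanSpace ℝ (Fin d)) :
    f (x + v) ≤ f x + inner ℝ (gradient f x) v + M / (1 + γ) * ‖v‖ ^ (1 + γ) := by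
  have h1γ : (0:ℝ) < 1 + γ := by linarith
  set φ : ℝ → ℝ := fun t => f (x + t • v) - t * inner ℝ (gradient f x) v
      - M * ‖v‖ ^ (1 + γ) * t ^ (1 + γ) / (1 + γ) with hφ
  have hline : ∀ t : ℝ, HasDerivAt (fun s : ℝ => x + s • v) v t := by
    intro t
    simpa using ((hasDerivAt_id t).smul_const v).const_add x
  have hfd : ∀ t : ℝ, HasDerivAt (fun s => f (x + s • v))
      (inner ℝ (gradient f (x + t • v)) v) t := by
    intro t
    have hg : HasFDerivAt f (fderiv ℝ f (x + t • v)) (x + t • v) :=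
      (hf _).hasFDerivAt
    have := hg.comp_hasDerivAt t (hline t)
    have hgrad : (fderiv ℝ f (x + t • v)) v = inner ℝ (gradient f (x + t • v)) v := by
      rw [(hf _).hasGradientAt.hasFDerivAt.fderiv]; simp [InnerProductSpace.toDual_apply_apply]
    rwa [hgrad] at this
  have hφd : ∀ t : ℝ, HasDerivAt φ
      (inner ℝ (gradient f (x + t • v)) v - inner ℝ (gradient f x) v
        - M * ‖v‖ ^ (1 + γ) * t ^ γ) t := by
    intro t
    have h2 : HasDerivAt (fun s : ℝ => s * inner ℝ (gradient f x) v)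
        (inner ℝ (gradient f x) v) t := by
      simpa using (hasDerivAt_id t).mul_const (inner ℝ (gradient f x) v : ℝ)
    have h3 : HasDerivAt (fun s : ℝ => M * ‖v‖ ^ (1 + γ) * s ^ (1 + γ) / (1 + γ))
        (M * ‖v‖ ^ (1 + γ) * t ^ γ) t := by
      have := (Real.hasDerivAt_rpow_const (x := t) (p := 1 + γ) (Or.inr (by linarith)))
      have h4 := (this.const_mul (M * ‖v‖ ^ (1 + γ))).div_const (1 + γ)
      refine h4.congr_deriv ?_
      rw [add_sub_cancel_left]
      field_simp
    exact ((hfd t).sub h2).sub h3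
  have hderiv_nonpos : ∀ t ∈ Set.Ioo (0:ℝ) 1, deriv φ t ≤ 0 := by
    intro t ht
    rw [(hφd t).deriv]
    have hip : inner ℝ (gradient f (x + t • v)) v - inner ℝ (gradient f x) v
        = inner ℝ (gradient f (x + t • v) - gradient f x) v :=
      (inner_sub_left (𝕜 := ℝ) _ _ _).symm
    rw [hip]
    have hb : (inner ℝ (gradient f (x + t • v) - gradient f x) v : ℝ) ≤
        M * t ^ γ * ‖v‖ ^ (1 + γ) := by
      calc (inner ℝ (gradient f (x + t • v) - gradient f x) v : ℝ)
          ≤ ‖gradient f (x + t • v) - gradient f x‖ * ‖v‖ := real_inner_le_norm _ _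
        _ ≤ M * ‖(x + t • v) - x‖ ^ γ * ‖v‖ := by
            have := hHolder (x + t • v) x
            exact mul_le_mul_of_nonneg_right this (norm_nonneg v)
        _ = M * t ^ γ * ‖v‖ ^ (1 + γ) := by
            have h1 : ‖(x + t • v) - x‖ = t * ‖v‖ := by
              simp [norm_smul, abs_of_pos ht.1]
            rw [h1, Real.mul_rpow ht.1.le (norm_nonneg v),
              Real.rpow_add' (norm_nonneg v) (by linarith)]
            ring_nf
            rw [Real.rpow_one]
    nlinarith [Real.rpow_nonneg (norm_nonneg v) (1+γ), Real.rpow_nonneg ht.1.le γ]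
  have hcont : ContinuousOn φ (Set.Icc 0 1) := by
    apply Continuous.continuousOn
    exact ((hf.continuous.comp (continuous_const.add (continuous_id.smul continuous_const))).sub
      (continuous_id.mul continuous_const)).sub
      ((continuous_const.mul (Real.continuous_rpow_const h1γ.le)).div_const _)
  have hanti : AntitoneOn φ (Set.Icc 0 1) := by
    apply antitoneOn_of_deriv_nonpos (convex_Icc 0 1) hcont
    · intro t ht
      rw [interior_Icc] at ht
      exact (hφd t).differentiableAt.differentiableWithinAt
    · intro t ht
      rw [interior_Icc] at ht
      exact hderiv_nonpos t ht
  have := hanti (Set.left_mem_Icc.mpr zero_le_one) (Set.right_mem_Icc.mpr zero_le_one) zero_le_one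
  have h0 : φ 0 = f x := by
    show f (x + (0:ℝ) • v) - 0 * _ - M * ‖v‖ ^ (1 + γ) * (0:ℝ) ^ (1 + γ) / (1 + γ) = f x
    rw [zero_smul, add_zero, Real.zero_rpow (ne_of_gt h1γ)]
    ring
  have h1 : φ 1 = f (x + v) - inner ℝ (gradient f x) v - M * ‖v‖ ^ (1 + γ) / (1 + γ) := by
    show f (x + (1:ℝ) • v) - 1 * _ - M * ‖v‖ ^ (1 + γ) * (1:ℝ) ^ (1 + γ) / (1 + γ) = _
    rw [one_smul, Real.one_rpow]
    ring
  rw [h0, h1] at this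
  have hre : M / (1 + γ) * ‖v‖ ^ (1 + γ) = M * ‖v‖ ^ (1 + γ) / (1 + γ) := by ring
  rw [hre]
  linarith

lemma add_rpow_le' {x y p : ℝ} (hx : 0 ≤ x) (hy : 0 ≤ y) (hp : 0 ≤ p) :
    (x + y) ^ p ≤ 2 ^ p * (x ^ p + y ^ p) := by
  have hm0 : 0 ≤ max x y := le_trans hx (le_max_left _ _)
  have hmax : x + y ≤ 2 * max x y := by
    rcases le_total x y with h | h
    · rw [max_eq_right h]; linarith
    · rw [max_eq_left h]; linarith
  have hmp : (max x y) ^ p ≤ x ^ p + y ^ p := by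
    rcases max_cases x y with ⟨h1, _⟩ | ⟨h1, _⟩ <;> rw [h1]
    · nlinarith [Real.rpow_nonneg hy p]
    · nlinarith [Real.rpow_nonneg hx p]
  calc (x + y) ^ p ≤ (2 * max x y) ^ p := Real.rpow_le_rpow (by positivity) hmax hp
    _ = 2 ^ p * (max x y) ^ p := Real.mul_rpow (by norm_num) hm0
    _ ≤ 2 ^ p * (x ^ p + y ^ p) := by
        nlinarith [Real.rpow_nonneg (show (0:ℝ) ≤ 2 by norm_num) p]

set_option maxHeartbeats 1000000 in
lemma algebra_final' (γ M σ Δ : ℝ) (K : ℕ) (hK : 0 < K) (hγ0 : 0 < γ) (hγ1 : γ ≤ 1)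
    (hM : 0 < M) (hσ : 0 < σ) (hΔ : 0 < Δ) {η : ℝ}
    (hη : η = (1/σ) * ((1+γ)*Δ/(γ*M)) ^ (1/(1+γ)) / (K:ℝ)^(1/(1+γ))) :
    (Δ + (M * η^(1+γ)/(1+γ)) * (K * σ^(1+γ))) / (η * K)
      ≤ σ * (((1+γ)/γ)*M)^(1/(1+γ)) * Δ^(γ/(1+γ)) / (K:ℝ)^(γ/(1+γ)) := by
  have h1γ : (0:ℝ) < 1+γ := by linarith
  have hKR : (0:ℝ) < K := Nat.cast_pos.mpr hK
  set p := 1/(1+γ) with hpdef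
  set q := γ/(1+γ) with hqdef
  have hp0 : 0 < p := by rw [hpdef]; positivity
  have hq0 : 0 < q := by rw [hqdef]; positivity
  have hpq : p + q = 1 := by rw [hpdef, hqdef]; field_simp
  have hqp : q ≤ p := by
    rw [hpdef, hqdef, div_le_div_iff₀ h1γ h1γ]
    nlinarith
  have hR0 : 0 < (1+γ)/γ := by positivity
  have hR1 : (1:ℝ) ≤ (1+γ)/γ := by rw [le_div_iff₀ hγ0]; linarith
  have hB0 : 0 < (1+γ)*Δ/(γ*M) := by positivity
  have hsplit : ∀ x:ℝ, 0 < x → x^p * x^q = x := by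
    intro x hx; rw [← Real.rpow_add hx, hpq, Real.rpow_one]
  have hpow1 : ∀ x:ℝ, 0 < x → (x^p)^(1+γ) = x := by
    intro x hx
    rw [← Real.rpow_mul hx.le, hpdef, one_div, inv_mul_cancel₀ (ne_of_gt h1γ), Real.rpow_one]
  have hηeq : η = ((1+γ)*Δ/(γ*M))^p / (σ * (K:ℝ)^p) := by rw [hη]; ring
  have hη0 : 0 < η := by
    rw [hηeq]
    exact div_pos (Real.rpow_pos_of_pos hB0 _) (by positivity)
  have hη1γ : η^(1+γ) = ((1+γ)*Δ/(γ*M)) / (σ^(1+γ) * K) := by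
    rw [hηeq, Real.div_rpow (Real.rpow_nonneg hB0.le _) (by positivity),
      Real.mul_rpow hσ.le (Real.rpow_nonneg hKR.le _), hpow1 _ hB0, hpow1 _ hKR]
  have hσ1γ : (0:ℝ) < σ^(1+γ) := Real.rpow_pos_of_pos hσ _
  have hnum : Δ + (M * η^(1+γ)/(1+γ)) * (K*σ^(1+γ)) = Δ*((1+γ)/γ) := by
    rw [hη1γ]
    field_simp
    ring
  rw [hnum]
  have e1 : ((1+γ)*Δ/(γ*M))^p = ((1+γ)/γ)^p * Δ^p / M^p := by
    have h : (1+γ)*Δ/(γ*M) = ((1+γ)/γ) * Δ / M := by field_simp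
    rw [h, Real.div_rpow (by positivity) hM.le, Real.mul_rpow hR0.le hΔ.le]
  have e2 : (((1+γ)/γ)*M)^p = ((1+γ)/γ)^p * M^p := Real.mul_rpow hR0.le hM.le
  have hMp : (0:ℝ) < M^p := Real.rpow_pos_of_pos hM _
  have hKp : (0:ℝ) < (K:ℝ)^p := Real.rpow_pos_of_pos hKR _
  have hKq : (0:ℝ) < (K:ℝ)^q := Real.rpow_pos_of_pos hKR _
  have hRp : (0:ℝ) < ((1+γ)/γ)^p := Real.rpow_pos_of_pos hR0 _
  have hRq : (0:ℝ) < ((1+γ)/γ)^q := Real.rpow_pos_of_pos hR0 _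
  have hΔp : (0:ℝ) < Δ^p := Real.rpow_pos_of_pos hΔ _
  have hΔq : (0:ℝ) < Δ^q := Real.rpow_pos_of_pos hΔ _
  have heq : Δ*((1+γ)/γ)/(η*K) = σ*((1+γ)/γ)^q*M^p*Δ^q/(K:ℝ)^q := by
    rw [hηeq, e1, div_eq_div_iff (by positivity) (by positivity)]
    have hKs := hsplit _ hKR
    have hΔs := hsplit _ hΔ
    have hRs := hsplit _ hR0
    have hRs2 : γ * (((1+γ)/γ)^p * ((1+γ)/γ)^q) = 1+γ := by
      rw [hRs]
      field_simp
    field_simp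
    linear_combination (Δ*(1+γ)) * hKs - (K:ℝ)*Δ * hRs2
      - (K:ℝ)*γ*(((1+γ)/γ)^p*((1+γ)/γ)^q) * hΔs
  rw [heq]
  calc σ*((1+γ)/γ)^q*M^p*Δ^q/(K:ℝ)^q
      ≤ σ*((1+γ)/γ)^p*M^p*Δ^q/(K:ℝ)^q := by
        have key : ((1+γ)/γ)^q ≤ ((1+γ)/γ)^p :=
          Real.rpow_le_rpow_of_exponent_le hR1 hqp
        have h1 : σ*((1+γ)/γ)^q*M^p*Δ^q ≤ σ*((1+γ)/γ)^p*M^p*Δ^q :=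
          mul_le_mul_of_nonneg_right (mul_le_mul_of_nonneg_right
            (mul_le_mul_of_nonneg_left key hσ.le) hMp.le) hΔq.le
        exact (div_le_div_iff_of_pos_right hKq).mpr h1
    _ = σ * (((1+γ)/γ)*M)^p * Δ^q / (K:ℝ)^q := by rw [e2]; ring

set_option maxHeartbeats 2000000 in
theorem stmt_4 (d K : ℕ) (hd : 0 < d) (hK : 0 < K)
    {Ω : Type*} [m0 : MeasurableSpace Ω] (μ : Measure Ω) [IsProbabilityMeasure μ]
    (ℱ : ℕ → MeasurableSpace Ω) (hℱ : ∀ k, ℱ k ≤ m0)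
    (f : EuclideanSpace ℝ (Fin d) → ℝ) (hf : Differentiable ℝ f)
    (fstar : ℝ) (hfbdd : ∀ x, fstar ≤ f x)
    (γ M σ η : ℝ) (hγ0 : 0 < γ) (hγ1 : γ ≤ 1) (hM : 0 < M) (hσ : 0 < σ)
    (hHolder : ∀ x y : EuclideanSpace ℝ (Fin d),
      ‖gradient f x - gradient f y‖ ≤ M * ‖x - y‖ ^ γ)
    (w G : ℕ → Ω → EuclideanSpace ℝ (Fin d))
    (w0 : EuclideanSpace ℝ (Fin d)) (hw0 : w 0 = fun _ => w0)
    (hgap : fstar < f w0)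
    (cγ : ℝ)
    (hcγ : cγ = (1 / σ) * ((1 + γ) * (f w0 - fstar) / (γ * M)) ^ (1 / (1 + γ)))
    (hη : η = cγ / (K : ℝ) ^ (1 / (1 + γ)))
    (hiter : ∀ k, w (k + 1) = fun ω => w k ω - η • G k ω)
    (hadapted : ∀ k, StronglyMeasurable[ℱ k] (w k))
    (hGint : ∀ k, Integrable (G k) μ)
    (hGmoment_int : ∀ k, Integrable (fun ω => ‖G k ω‖ ^ (1 + γ)) μ)
    (hunbiased : ∀ k, μ[G k | ℱ k] =ᵐ[μ] fun ω => gradient f (w k ω))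
    (hmoment : ∀ k, ∀ᵐ ω ∂μ,
      (μ[fun ω' => ‖G k ω'‖ ^ (1 + γ) | ℱ k]) ω ≤ σ ^ (1 + γ)) :
    (Finset.range K).inf' (Finset.nonempty_range_iff.mpr hK.ne')
        (fun k => ∫ ω, ‖gradient f (w k ω)‖ ^ 2 ∂μ)
      ≤ (σ * (((1 + γ) / γ) * M) ^ (1 / (1 + γ)) * (f w0 - fstar) ^ (γ / (1 + γ)))
          / (K : ℝ) ^ (γ / (1 + γ)) := by
  have h1γ : (0:ℝ) < 1 + γ := by linarith
  have hΔ : 0 < f w0 - fstar := sub_pos.mpr hgap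
  have hKR : (0:ℝ) < (K:ℝ) := by exact_mod_cast hK
  have hB : 0 < (1 + γ) * (f w0 - fstar) / (γ * M) := by
    apply div_pos (by nlinarith) (by positivity)
  have hcγ0 : 0 < cγ := by
    rw [hcγ]; exact mul_pos (by positivity) (Real.rpow_pos_of_pos hB _)
  have hη0 : 0 < η := by
    rw [hη]; exact div_pos hcγ0 (Real.rpow_pos_of_pos hKR _)
  -- continuity of the gradient
  have hgc : Continuous (gradient f) := by
    rw [continuous_iff_continuousAt]
    intro x0
    rw [ContinuousAt, tendsto_iff_norm_sub_tendsto_zero]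
    apply squeeze_zero (fun x => norm_nonneg _) (fun x => hHolder x x0)
    have h1 : Filter.Tendsto (fun x : EuclideanSpace ℝ (Fin d) => ‖x - x0‖) (nhds x0)
        (nhds 0) := by
      have hc : Continuous (fun x : EuclideanSpace ℝ (Fin d) => ‖x - x0‖) :=
        (continuous_id.sub continuous_const).norm
      have := hc.tendsto x0
      simpa using this
    have h2 : Filter.Tendsto (fun t : ℝ => M * t ^ γ) (nhds 0) (nhds 0) := by
      have h3 := (Real.continuousAt_rpow_const 0 γ (Or.inr hγ0.le)).tendsto
      rw [Real.zero_rpow hγ0.ne'] at h3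
      have := h3.const_mul M
      simpa using this
    exact h2.comp h1
  have hw_sm : ∀ k, StronglyMeasurable (w k) := fun k => (hadapted k).mono (hℱ k)
  have hv_sm : ∀ k, StronglyMeasurable (fun ω => gradient f (w k ω)) := fun k =>
    hgc.comp_stronglyMeasurable (hw_sm k)
  have hv_smF : ∀ k, StronglyMeasurable[ℱ k] (fun ω => gradient f (w k ω)) := fun k =>
    hgc.comp_stronglyMeasurable (hadapted k)
  -- the cumulative noise norm
  set S : ℕ → Ω → ℝ := fun k ω => ∑ j ∈ Finset.range k, ‖G j ω‖ with hSdef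
  have hS_nonneg : ∀ k ω, 0 ≤ S k ω := fun k ω =>
    Finset.sum_nonneg fun j _ => norm_nonneg _
  have hS_succ : ∀ k ω, S (k+1) ω = S k ω + ‖G k ω‖ := fun k ω =>
    Finset.sum_range_succ _ _
  have hS_meas : ∀ k, AEStronglyMeasurable (S k) μ := fun k =>
    Finset.aestronglyMeasurable_fun_sum _ fun j _ => (hGint j).aestronglyMeasurable.norm
  have hrpow_split : ∀ x : ℝ, 0 ≤ x → x ^ (1+γ) = x * x ^ γ := by
    intro x hx
    rw [Real.rpow_add' hx (by linarith), Real.rpow_one]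
  have hSp_int : ∀ k, Integrable (fun ω => S k ω ^ (1+γ)) μ := by
    intro k
    induction k with
    | zero =>
      have : (fun ω : Ω => S 0 ω ^ (1+γ)) = fun _ => (0:ℝ) := by
        funext ω
        simp [hSdef, Real.zero_rpow (ne_of_gt h1γ)]
      rw [this]
      exact integrable_const 0
    | succ k ih =>
      refine ((ih.add (hGmoment_int k)).const_mul ((2:ℝ)^(1+γ))).mono'
        ((Real.continuous_rpow_const h1γ.le).comp_aestronglyMeasurable (hS_meas (k+1)))
        (Filter.Eventually.of_forall fun ω => ?_)
      rw [Real.norm_eq_abs, abs_of_nonneg (Real.rpow_nonneg (hS_nonneg _ _) _), hS_succ]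
      exact add_rpow_le' (hS_nonneg k ω) (norm_nonneg _) h1γ.le
  -- distance bound and gradient bound
  have hwdist : ∀ k ω, ‖w k ω - w0‖ ≤ η * S k ω := by
    intro k
    induction k with
    | zero => intro ω; simp [hw0, hSdef]
    | succ k ih =>
      intro ω
      rw [hiter k]
      have h1 : w k ω - η • G k ω - w0 = (w k ω - w0) - η • G k ω := by abel
      calc ‖w k ω - η • G k ω - w0‖ = ‖(w k ω - w0) - η • G k ω‖ := by rw [h1]
        _ ≤ ‖w k ω - w0‖ + ‖η • G k ω‖ := norm_sub_le _ _
        _ ≤ η * S k ω + η * ‖G k ω‖ := by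
            rw [norm_smul, Real.norm_eq_abs, abs_of_pos hη0]
            exact add_le_add (ih ω) le_rfl
        _ = η * S (k+1) ω := by rw [hS_succ]; ring
  have hvb : ∀ k ω, ‖gradient f (w k ω)‖ ≤ ‖gradient f w0‖ + M * η^γ * S k ω ^ γ := by
    intro k ω
    calc ‖gradient f (w k ω)‖
        ≤ ‖gradient f w0‖ + ‖gradient f (w k ω) - gradient f w0‖ := by
          have := norm_sub_norm_le (gradient f (w k ω)) (gradient f w0)
          linarith [norm_sub_le (gradient f (w k ω)) (gradient f w0)]
      _ ≤ ‖gradient f w0‖ + M * ‖w k ω - w0‖ ^ γ := by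
          linarith [hHolder (w k ω) w0]
      _ ≤ ‖gradient f w0‖ + M * η^γ * S k ω ^ γ := by
          have h1 : ‖w k ω - w0‖ ^ γ ≤ (η * S k ω) ^ γ :=
            Real.rpow_le_rpow (norm_nonneg _) (hwdist k ω) hγ0.le
          rw [Real.mul_rpow hη0.le (hS_nonneg k ω)] at h1
          nlinarith
  set C : ℝ := ‖gradient f w0‖ with hCdef
  have hC0 : 0 ≤ C := norm_nonneg _
  have hnormprod : ∀ k, Integrable (fun ω => ‖gradient f (w k ω)‖ * ‖G k ω‖) μ := by
    intro k
    refine ((((hGint k).norm.const_mul C)).add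
        ((hSp_int (k+1)).const_mul (M * η^γ))).mono'
      ((hv_sm k).aestronglyMeasurable.norm.mul (hGint k).aestronglyMeasurable.norm)
      (Filter.Eventually.of_forall fun ω => ?_)
    rw [Real.norm_eq_abs, abs_of_nonneg (by positivity)]
    have h1 := hvb k ω
    have h2 : S k ω ^ γ * ‖G k ω‖ ≤ S (k+1) ω ^ (1+γ) := by
      have e1 : S k ω ^ γ ≤ S (k+1) ω ^ γ := by
        apply Real.rpow_le_rpow (hS_nonneg k ω) _ hγ0.le
        rw [hS_succ]; linarith [norm_nonneg (G k ω)]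
      have e2 : ‖G k ω‖ ≤ S (k+1) ω := by
        rw [hS_succ]; linarith [hS_nonneg k ω]
      calc S k ω ^ γ * ‖G k ω‖ ≤ S (k+1) ω ^ γ * S (k+1) ω :=
            mul_le_mul e1 e2 (norm_nonneg _) (Real.rpow_nonneg (hS_nonneg _ _) _)
        _ = S (k+1) ω ^ (1+γ) := by rw [hrpow_split _ (hS_nonneg _ _)]; ring
    have h3 : 0 ≤ ‖G k ω‖ := norm_nonneg _
    have h4 : 0 ≤ M * η^γ := by positivity
    have h5 := mul_le_mul_of_nonneg_right h1 h3
    have h6 := mul_le_mul_of_nonneg_left h2 h4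
    simp only [Pi.add_apply]
    nlinarith
  have hinner_int : ∀ k,
      Integrable (fun ω => (inner ℝ (gradient f (w k ω)) (G k ω) : ℝ)) μ := by
    intro k
    refine (hnormprod k).mono'
      ((hv_sm k).aestronglyMeasurable.inner (hGint k).aestronglyMeasurable)
      (Filter.Eventually.of_forall fun ω => ?_)
    rw [Real.norm_eq_abs]
    exact abs_real_inner_le_norm _ _
  have hv2_int : ∀ k, Integrable (fun ω => ‖gradient f (w k ω)‖ ^ 2) μ := by
    intro k
    have hpow2 : ∀ x : ℝ, 0 ≤ x → (x^γ)^2 ≤ 1 + x^(1+γ) := by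
      intro x hx
      have he : (x^γ)^2 = x^(γ*2) := by
        rw [← Real.rpow_natCast (x^γ) 2, ← Real.rpow_mul hx]
        norm_num
      rw [he]
      rcases le_total x 1 with hx1 | hx1
      · have := Real.rpow_le_one hx hx1 (by positivity : (0:ℝ) ≤ γ*2)
        linarith [Real.rpow_nonneg hx (1+γ)]
      · have := Real.rpow_le_rpow_of_exponent_le hx1 (by linarith : γ*2 ≤ 1+γ)
        linarith
    refine ((integrable_const (2*C^2 + 2*(M*η^γ)^2)).add
        ((hSp_int k).const_mul (2*(M*η^γ)^2))).mono'
      (((hv_sm k).measurable.norm.pow_const 2).aestronglyMeasurable)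
      (Filter.Eventually.of_forall fun ω => ?_)
    have h1 := hvb k ω
    have h2 := hpow2 (S k ω) (hS_nonneg k ω)
    have h3 : 0 ≤ S k ω ^ γ := Real.rpow_nonneg (hS_nonneg _ _) _
    have h4 : 0 ≤ ‖gradient f (w k ω)‖ := norm_nonneg _
    simp only [Pi.add_apply]
    rw [Real.norm_eq_abs, abs_of_nonneg (by positivity : (0:ℝ) ≤ ‖gradient f (w k ω)‖ ^ 2)]
    show ‖gradient f (w k ω)‖^2 ≤ 2*C^2 + 2*(M*η^γ)^2 + 2*(M*η^γ)^2 * S k ω ^(1+γ)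
    have e1 : ‖gradient f (w k ω)‖^2 ≤ (C + M*η^γ * S k ω ^ γ)^2 := pow_le_pow_left₀ h4 h1 2
    have e3 : 2*C*((M*η^γ) * S k ω ^ γ) ≤ C^2 + ((M*η^γ) * S k ω ^ γ)^2 := by
      nlinarith [sq_nonneg (C - (M*η^γ) * S k ω ^ γ)]
    have e5 : (M*η^γ)^2 * (S k ω ^ γ)^2 ≤ (M*η^γ)^2 * (1 + S k ω ^ (1+γ)) :=
      mul_le_mul_of_nonneg_left h2 (sq_nonneg _)
    nlinarith
  -- pathwise descent
  have hpath : ∀ ω n, f (w n ω) ≤ f w0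
      - η * ∑ k ∈ Finset.range n, (inner ℝ (gradient f (w k ω)) (G k ω) : ℝ)
      + (M * η^(1+γ)/(1+γ)) * ∑ k ∈ Finset.range n, ‖G k ω‖^(1+γ) := by
    intro ω n
    induction n with
    | zero => simp [hw0]
    | succ n ih =>
      have hw' : w (n+1) ω = w n ω + (-η) • G n ω := by
        rw [hiter n]; simp [sub_eq_add_neg, neg_smul]
      have hd := descent_lemma' f hf γ M hγ0 hM hHolder (w n ω) ((-η) • G n ω)
      rw [← hw'] at hd
      have hin : (inner ℝ (gradient f (w n ω)) ((-η) • G n ω) : ℝ)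
          = -η * inner ℝ (gradient f (w n ω)) (G n ω) := real_inner_smul_right _ _ _
      have hns : ‖(-η) • G n ω‖ ^ (1+γ) = η^(1+γ) * ‖G n ω‖^(1+γ) := by
        rw [norm_smul, Real.norm_eq_abs, abs_neg, abs_of_pos hη0,
          Real.mul_rpow hη0.le (norm_nonneg _)]
      rw [hin, hns] at hd
      rw [Finset.sum_range_succ, Finset.sum_range_succ, mul_add, mul_add]
      have hrw : M/(1+γ) * (η^(1+γ) * ‖G n ω‖^(1+γ))
          = M * η^(1+γ)/(1+γ) * ‖G n ω‖^(1+γ) := by ring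
      rw [hrw] at hd
      have hrw2 : η * (inner ℝ (gradient f (w n ω)) (G n ω) : ℝ)
          = -(-η * (inner ℝ (gradient f (w n ω)) (G n ω) : ℝ)) := by ring
      linarith
  have hsum_ineq : ∀ ω,
      η * ∑ k ∈ Finset.range K, (inner ℝ (gradient f (w k ω)) (G k ω) : ℝ)
        ≤ (f w0 - fstar) + (M * η^(1+γ)/(1+γ)) * ∑ k ∈ Finset.range K, ‖G k ω‖^(1+γ) := by
    intro ω
    have h1 := hpath ω K
    have h2 := hfbdd (w K ω)
    linarith
  -- integrate
  have hIntL : Integrable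
      (fun ω => ∑ k ∈ Finset.range K, (inner ℝ (gradient f (w k ω)) (G k ω) : ℝ)) μ :=
    integrable_finsetSum _ fun k _ => hinner_int k
  have hIntR : Integrable
      (fun ω => (f w0 - fstar)
        + (M * η^(1+γ)/(1+γ)) * ∑ k ∈ Finset.range K, ‖G k ω‖^(1+γ)) μ :=
    (integrable_const _).add
      ((integrable_finsetSum _ fun k _ => hGmoment_int k).const_mul _)
  have hmono := integral_mono (hIntL.const_mul η) hIntR hsum_ineq
  rw [integral_const_mul, integral_finsetSum _ (fun k _ => hinner_int k),
    integral_add (integrable_const _)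
      ((integrable_finsetSum _ fun k _ => hGmoment_int k).const_mul _),
    integral_const, integral_const_mul,
    integral_finsetSum _ (fun k _ => hGmoment_int k)] at hmono
  simp only [measure_univ, probReal_univ, smul_eq_mul, one_mul] at hmono
  -- identify inner integrals with squared gradient norms
  have hIk : ∀ k, ∫ ω, (inner ℝ (gradient f (w k ω)) (G k ω) : ℝ) ∂μ
      = ∫ ω, ‖gradient f (w k ω)‖ ^ 2 ∂μ := by
    intro k
    rw [integral_inner_condexp' (hℱ k) (hv_smF k) (hGint k) (hnormprod k)]
    refine integral_congr_ae ?_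
    filter_upwards [hunbiased k] with ω hω
    rw [hω, real_inner_self_eq_norm_sq]
  -- moment bound
  have hGm : ∀ k, ∫ ω, ‖G k ω‖^(1+γ) ∂μ ≤ σ^(1+γ) := by
    intro k
    rw [← integral_condExp (hℱ k) (f := fun ω => ‖G k ω‖^(1+γ))]
    calc ∫ ω, (μ[fun ω' => ‖G k ω'‖^(1+γ) | ℱ k]) ω ∂μ
        ≤ ∫ _ω, σ^(1+γ) ∂μ :=
          integral_mono_ae integrable_condExp (integrable_const _) (hmoment k)
      _ = σ^(1+γ) := by simp
  have hsumG : ∑ k ∈ Finset.range K, ∫ ω, ‖G k ω‖^(1+γ) ∂μ ≤ K * σ^(1+γ) := by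
    calc ∑ k ∈ Finset.range K, ∫ ω, ‖G k ω‖^(1+γ) ∂μ
        ≤ ∑ _k ∈ Finset.range K, σ^(1+γ) := Finset.sum_le_sum fun k _ => hGm k
      _ = K * σ^(1+γ) := by rw [Finset.sum_const, Finset.card_range, nsmul_eq_mul]
  simp only [hIk] at hmono
  -- min is below average
  set m := (Finset.range K).inf' (Finset.nonempty_range_iff.mpr hK.ne')
      (fun k => ∫ ω, ‖gradient f (w k ω)‖ ^ 2 ∂μ) with hmdef
  have hKm : (K:ℝ) * m ≤ ∑ k ∈ Finset.range K, ∫ ω, ‖gradient f (w k ω)‖ ^ 2 ∂μ := by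
    have h := Finset.card_nsmul_le_sum (Finset.range K)
      (fun k => ∫ ω, ‖gradient f (w k ω)‖ ^ 2 ∂μ) m
      (fun k hk => Finset.inf'_le _ hk)
    rwa [Finset.card_range, nsmul_eq_mul] at h
  have hc0 : (0:ℝ) ≤ M * η^(1+γ)/(1+γ) := by positivity
  have hfinal : m ≤ ((f w0 - fstar) + (M * η^(1+γ)/(1+γ)) * (K * σ^(1+γ))) / (η * K) := by
    rw [le_div_iff₀ (by positivity)]
    have h1 : η * ((K:ℝ) * m) ≤ η * ∑ k ∈ Finset.range K,
        ∫ ω, ‖gradient f (w k ω)‖ ^ 2 ∂μ :=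
      mul_le_mul_of_nonneg_left hKm hη0.le
    have h2 : (M * η^(1+γ)/(1+γ)) * ∑ k ∈ Finset.range K, ∫ ω, ‖G k ω‖^(1+γ) ∂μ
        ≤ (M * η^(1+γ)/(1+γ)) * (K * σ^(1+γ)) :=
      mul_le_mul_of_nonneg_left hsumG hc0
    nlinarith
  refine le_trans hfinal ?_
  have hηeq : η = (1/σ) * ((1+γ)*(f w0 - fstar)/(γ*M)) ^ (1/(1+γ)) / (K:ℝ)^(1/(1+γ)) := by
    rw [hη, hcγ]
  exact algebra_final' γ M σ (f w0 - fstar) K hK hγ0 hγ1 hM hσ hΔ hηeq
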